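/- Let Θ be a structure with finite relational signature that is a reduct of a countably infinite ordered homogeneous Ramsey structure Δ with finite relational signature, and let N be a closed transformation monoid that is minimal above End(Θ). Then there exist elements c₁, …, c_{n(Θ)} of Δ, where n(Θ) is the maximal arity of the relations of Θ, and a function f from the domain to itself that is canonical as a function from (Δ, c₁, …, c_{n(Θ)}) to Δ, such that N is the smallest closed transformation monoid containing End(Θ) together with f. -/

import Mathlib

open FirstOrder FirstOrder.Language

namespace PaperDef

/-- The structure `M` is *ordered*: some binary relation symbol of the signature
denotes a linear order on the domain. -/
def Ordered (L : Language) (M : Type*) [L.Structure M] : Prop :=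
  ∃ r : L.Relations 2, IsLinearOrder M (fun a b => Structure.RelMap r ![a, b])

/-- A class of structures is a *Ramsey class*. -/
def RamseyClass {L : Language} (K : Set (CategoryTheory.Bundled.{0} L.Structure)) : Prop :=
  ∀ k : ℕ, 1 ≤ k → ∀ H ∈ K, ∀ P ∈ K, ∃ S ∈ K,
    ∀ χ : {Q : L.Substructure S // Nonempty (P ≃[L] Q)} → Fin k,
      ∃ e : H ↪[L] S,
        ∀ Q₁ Q₂ : {Q : L.Substructure S // Nonempty (P ≃[L] Q)},
          (Q₁.1 : Set S) ⊆ Set.range e → (Q₂.1 : Set S) ⊆ Set.range e → χ Q₁ = χ Q₂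

/-- `M` is *finitely bounded*: membership of a finite(ly generated) structure in the age of `M`
is characterized by finitely many forbidden substructures. -/
def FinitelyBounded (L : Language) (M : Type) [L.Structure M] : Prop :=
  ∃ (k : ℕ) (F : Fin k → CategoryTheory.Bundled.{0} L.Structure),
    (∀ i, Structure.FG L (F i)) ∧
    ∀ A : CategoryTheory.Bundled.{0} L.Structure, Structure.FG L A →
      (A ∈ L.age M ↔ ∀ i, ¬ Nonempty ((F i) ↪[L] A))

/-- The `L'`-structure on `M` is a *reduct* of the `L`-structure on `M`:
every relation of the former is first-order definable in the latter. -/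
def IsReduct (L L' : Language) (M : Type*) [L.Structure M] [L'.Structure M] : Prop :=
  ∀ (n : ℕ) (r : L'.Relations n), ∃ φ : L.Formula (Fin n),
    ∀ x : Fin n → M, Structure.RelMap r x ↔ φ.Realize x

/-- Two `n`-tuples have the same (complete first-order) type. -/
def SameType (L : Language) (M : Type*) [L.Structure M] {n : ℕ} (a b : Fin n → M) : Prop :=
  ∀ φ : L.Formula (Fin n), φ.Realize a ↔ φ.Realize b

/-- A function is *canonical*: it maps tuples of equal types to tuples of equal types. -/
def Canonical (L L' : Language) (X Ω : Type*) [L.Structure X] [L'.Structure Ω]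
    (f : X → Ω) : Prop :=
  ∀ (n : ℕ) (a b : Fin n → X), SameType L X a b →
    SameType L' Ω (fun i => f (a i)) (fun i => f (b i))

/-- A function is *canonical on a set `F`*. -/
def CanonicalOn (L L' : Language) (X Ω : Type*) [L.Structure X] [L'.Structure Ω]
    (F : Set X) (f : X → Ω) : Prop :=
  ∀ (n : ℕ) (a b : Fin n → X), (∀ i, a i ∈ F) → (∀ i, b i ∈ F) → SameType L X a b →
    SameType L' Ω (fun i => f (a i)) (fun i => f (b i))

/-- `M` is ω-categorical: every countable model of its complete theory is isomorphic to it. -/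
def OmegaCategorical (L : Language) (M : Type) [L.Structure M] : Prop :=
  ∀ (N : Type) [L.Structure N], Countable N →
    (∀ φ : L.Sentence, φ ∈ L.completeTheory M → N ⊨ φ) → Nonempty (M ≃[L] N)

/-- Primitive positive formulas: built from atomic formulas using `∧` and `∃`. -/
inductive IsPrimitivePositive {L : Language} {α : Type*} :
    ∀ {n : ℕ}, L.BoundedFormula α n → Prop
  | atomic {n : ℕ} {φ : L.BoundedFormula α n} (h : φ.IsAtomic) : IsPrimitivePositive φ
  | inf {n : ℕ} {φ ψ : L.BoundedFormula α n} :
      IsPrimitivePositive φ → IsPrimitivePositive ψ → IsPrimitivePositive (φ ⊓ ψ)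
  | ex {n : ℕ} {φ : L.BoundedFormula α (n + 1)} :
      IsPrimitivePositive φ → IsPrimitivePositive φ.ex

/-- Existential formulas: existentially quantified quantifier-free formulas. -/
inductive IsExistential {L : Language} {α : Type*} :
    ∀ {n : ℕ}, L.BoundedFormula α n → Prop
  | of_isQF {n : ℕ} {φ : L.BoundedFormula α n} (h : φ.IsQF) : IsExistential φ
  | ex {n : ℕ} {φ : L.BoundedFormula α (n + 1)} : IsExistential φ → IsExistential φ.ex

/-- Existential positive formulas: built from atomic formulas using `∧`, `∨` and `∃`. -/
inductive IsExistentialPositive {L : Language} {α : Type*} :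
    ∀ {n : ℕ}, L.BoundedFormula α n → Prop
  | atomic {n : ℕ} {φ : L.BoundedFormula α n} (h : φ.IsAtomic) : IsExistentialPositive φ
  | inf {n : ℕ} {φ ψ : L.BoundedFormula α n} :
      IsExistentialPositive φ → IsExistentialPositive ψ → IsExistentialPositive (φ ⊓ ψ)
  | sup {n : ℕ} {φ ψ : L.BoundedFormula α n} :
      IsExistentialPositive φ → IsExistentialPositive ψ → IsExistentialPositive (φ ⊔ ψ)
  | ex {n : ℕ} {φ : L.BoundedFormula α (n + 1)} :
      IsExistentialPositive φ → IsExistentialPositive φ.ex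

/-- A `k`-ary operation *preserves* an `m`-ary relation. -/
def Preserves {D : Type*} {k m : ℕ} (f : (Fin k → D) → D) (R : (Fin m → D) → Prop) : Prop :=
  ∀ rows : Fin k → Fin m → D, (∀ j, R (rows j)) → R (fun i => f (fun j => rows j i))

/-- A unary operation *preserves* an `m`-ary relation. -/
def Preserves1 {D : Type*} {m : ℕ} (f : D → D) (R : (Fin m → D) → Prop) : Prop :=
  ∀ a : Fin m → D, R a → R (fun i => f (a i))

/-- An endomorphism of the structure `M`. -/
def IsEndo (L : Language) (M : Type*) [L.Structure M] (f : M → M) : Prop :=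
  ∀ (n : ℕ) (r : L.Relations n) (x : Fin n → M),
    Structure.RelMap r x → Structure.RelMap r (fun i => f (x i))

/-- A self-embedding of the structure `M`. -/
def IsSelfEmb (L : Language) (M : Type*) [L.Structure M] (f : M → M) : Prop :=
  Function.Injective f ∧ ∀ (n : ℕ) (r : L.Relations n) (x : Fin n → M),
    (Structure.RelMap r (fun i => f (x i)) ↔ Structure.RelMap r x)

/-- A polymorphism of the structure `M`. -/
def IsPoly (L : Language) (M : Type*) [L.Structure M] {k : ℕ} (f : (Fin k → M) → M) : Prop :=
  ∀ (n : ℕ) (r : L.Relations n), Preserves f (fun x : Fin n → M => Structure.RelMap r x)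

/-- The set of endomorphisms of `M`. -/
def EndSet (L : Language) (M : Type*) [L.Structure M] : Set (M → M) :=
  {f | IsEndo L M f}

/-- Two tuples lie in the same orbit of the automorphism group. -/
def SameOrbit (L : Language) (M : Type*) [L.Structure M] {n : ℕ} (a b : Fin n → M) : Prop :=
  ∃ α : M ≃[L] M, ∀ i, α (a i) = b i

/-- The subsets `s` and `t` induce isomorphic substructures. -/
def SetIso (L : Language) (X : Type*) [L.Structure X] (s t : Set X) : Prop :=
  ∃ g : s ≃ t, ∀ (n : ℕ) (r : L.Relations n) (x : Fin n → s),
    (Structure.RelMap r (fun j => ((x j : X))) ↔ Structure.RelMap r (fun j => ((g (x j) : t) : X)))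

/-- The `L[[Fin n]]`-structure on `M` obtained by naming the constants `c 0, …, c (n-1)`. -/
def withConstantsStruct (L : Language) {M : Type*} [L.Structure M] {n : ℕ} (c : Fin n → M) :
    (L[[Fin n]]).Structure M :=
  letI := constantsOn.structure c
  inferInstance

/-- Two sequences of `n` tuples from a product `Ξ₁ × ⋯ × Ξₘ` have the same type:
componentwise, the corresponding `n`-tuples have the same type. -/
def SameSeqType {m : ℕ} (Ls : Fin m → Language) (Xs : Fin m → Type*)
    [∀ i, (Ls i).Structure (Xs i)] {n : ℕ} (a b : Fin n → ∀ i, Xs i) : Prop :=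
  ∀ i, SameType (Ls i) (Xs i) (fun j => a j i) (fun j => b j i)

/-- A function defined on a product of structures is canonical. -/
def CanonicalProd {m : ℕ} (Ls : Fin m → Language) (Xs : Fin m → Type*)
    [∀ i, (Ls i).Structure (Xs i)] (L' : Language) (Ω : Type*) [L'.Structure Ω]
    (f : (∀ i, Xs i) → Ω) : Prop :=
  ∀ (n : ℕ) (a b : Fin n → ∀ i, Xs i), SameSeqType Ls Xs a b →
    SameType L' Ω (fun j => f (a j)) (fun j => f (b j))

end PaperDef


namespace PaperDef

section Monoids

variable {D : Type*}

/-- A closed transformation monoid: contains the identity, is closed under composition,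
and is topologically closed in the topology of pointwise convergence (`D` discrete). -/
def IsClosedTransMonoid (S : Set (D → D)) : Prop :=
  id ∈ S ∧ (∀ g h, g ∈ S → h ∈ S → g ∘ h ∈ S) ∧
    ∀ g : D → D, (∀ F : Set D, F.Finite → ∃ h ∈ S, ∀ x ∈ F, h x = g x) → g ∈ S

/-- The smallest closed transformation monoid containing a given set of unary operations. -/
def ClosedMonoidGenBy (A : Set (D → D)) : Set (D → D) :=
  ⋂₀ {S : Set (D → D) | IsClosedTransMonoid S ∧ A ⊆ S}

/-- `N` is a minimal closed transformation monoid above `M₀`. -/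
def MinimalMonoidAbove (M₀ N : Set (D → D)) : Prop :=
  M₀ ⊂ N ∧ ∀ R : Set (D → D), IsClosedTransMonoid R → M₀ ⊂ R → R ⊆ N → R = N

end Monoids

/-- Terms (compositions) over the generating set consisting of `f` and the automorphisms. -/
inductive MonoidTerm (L : Language) (M : Type*) [L.Structure M] (f : M → M) : (M → M) → Prop
  | id : MonoidTerm L M f id
  | base : MonoidTerm L M f f
  | auto (α : M ≃[L] M) : MonoidTerm L M f α
  | comp {g h : M → M} : MonoidTerm L M f g → MonoidTerm L M f h → MonoidTerm L M f (g ∘ h)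

/-- `f` generates `g` over the structure `M`: `g` lies in the smallest closed transformation
monoid containing `f` and all automorphisms of `M`; equivalently, on every finite set `g`
agrees with some composition of `f` and automorphisms. -/
def GeneratesOverMonoid (L : Language) (M : Type*) [L.Structure M] (f g : M → M) : Prop :=
  ∀ F : Set M, F.Finite → ∃ h : M → M, MonoidTerm L M f h ∧ ∀ x ∈ F, h x = g x

section Clones

variable {D : Type*}

/-- A closed clone: a family of sets of finitary operations containing all projections,
closed under composition, and with every arity-part topologically closed in the topology of
pointwise convergence (`D` discrete). -/
def IsClosedClone (C : ∀ k : ℕ, Set ((Fin k → D) → D)) : Prop :=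
  (∀ (k : ℕ) (i : Fin k), (fun x => x i) ∈ C k) ∧
  (∀ (k l : ℕ) (f : (Fin l → D) → D) (gs : Fin l → (Fin k → D) → D),
      f ∈ C l → (∀ j, gs j ∈ C k) → (fun x => f (fun j => gs j x)) ∈ C k) ∧
  (∀ (k : ℕ) (g : (Fin k → D) → D),
      (∀ F : Set (Fin k → D), F.Finite → ∃ h ∈ C k, ∀ x ∈ F, h x = g x) → g ∈ C k)

/-- Containment of clones. -/
def CloneLE (C C' : ∀ k : ℕ, Set ((Fin k → D) → D)) : Prop :=
  ∀ k, C k ⊆ C' k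

/-- Proper containment of clones. -/
def CloneLT (C C' : ∀ k : ℕ, Set ((Fin k → D) → D)) : Prop :=
  CloneLE C C' ∧ C ≠ C'

/-- `N` is a minimal closed clone above `C₀`. -/
def MinimalCloneAbove (C₀ N : ∀ k : ℕ, Set ((Fin k → D) → D)) : Prop :=
  CloneLT C₀ N ∧ ∀ E : ∀ k : ℕ, Set ((Fin k → D) → D),
    IsClosedClone E → CloneLT C₀ E → CloneLE E N → E = N

/-- The smallest closed clone containing a set `S` of unary operations. -/
def CloneGenByUnary (S : Set (D → D)) : ∀ k : ℕ, Set ((Fin k → D) → D) :=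
  fun k => {g | ∀ C : ∀ j : ℕ, Set ((Fin j → D) → D), IsClosedClone C →
    (∀ e ∈ S, (fun x : Fin 1 → D => e (x 0)) ∈ C 1) → g ∈ C k}

/-- The smallest closed clone containing a set `S` of unary operations together with a
single operation `f` of arity `p`. -/
def CloneGenByUnaryAnd (S : Set (D → D)) {p : ℕ} (f : (Fin p → D) → D) :
    ∀ k : ℕ, Set ((Fin k → D) → D) :=
  fun k => {g | ∀ C : ∀ j : ℕ, Set ((Fin j → D) → D), IsClosedClone C →
    (∀ e ∈ S, (fun x : Fin 1 → D => e (x 0)) ∈ C 1) → f ∈ C p → g ∈ C k}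

end Clones

/-- The polymorphism clone of the structure `M`. -/
def PolSet (L : Language) (M : Type*) [L.Structure M] : ∀ k : ℕ, Set ((Fin k → M) → M) :=
  fun _ => {f | IsPoly L M f}

/-- Clone terms over the generating set consisting of `f` and the automorphisms of `M`. -/
inductive CloneTerm (L : Language) (M : Type*) [L.Structure M] {m : ℕ}
    (f : (Fin m → M) → M) : ∀ {k : ℕ}, ((Fin k → M) → M) → Prop
  | proj {k : ℕ} (i : Fin k) : CloneTerm L M f (fun x => x i)
  | autoComp {k : ℕ} (α : M ≃[L] M) {g : (Fin k → M) → M} :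
      CloneTerm L M f g → CloneTerm L M f (fun x => α (g x))
  | baseComp {k : ℕ} (gs : Fin m → (Fin k → M) → M) :
      (∀ j, CloneTerm L M f (gs j)) → CloneTerm L M f (fun x => f (fun j => gs j x))

/-- `f` generates the `k`-ary operation `g` over the structure `M`: `g` lies in the smallest
closed clone containing `f` and all automorphisms of `M`; equivalently, on every finite set
`g` agrees with some term over `f`, the automorphisms and projections. -/
def GeneratesOverClone (L : Language) (M : Type*) [L.Structure M] {m k : ℕ}
    (f : (Fin m → M) → M) (g : (Fin k → M) → M) : Prop :=
  ∀ F : Set (Fin k → M), F.Finite → ∃ h : (Fin k → M) → M,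
    CloneTerm L M f h ∧ ∀ x ∈ F, h x = g x

end PaperDef

open FirstOrder FirstOrder.Language

namespace CanonAux

variable {L : Language} {M : Type*} [L.Structure M]

/-- The type of atomic data of an `ι`-tuple. -/
def DatT (L : Language) (ι : Type*) : Type _ :=
  (ι → ι → Prop) × ((p : Σ n, L.Relations n) → (Fin p.1 → ι) → Prop)

instance datT_finite (ι : Type*) [Finite ι] [Finite (Σ n, L.Relations n)] :
    Finite (DatT L ι) := by
  unfold DatT
  infer_instance

instance datT_nonempty (L : Language) (ι : Type*) : Nonempty (DatT L ι) :=
  ⟨fun _ _ => True, fun _ _ => True⟩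

/-- The atomic data of a tuple in a structure. -/
def dat (L : Language) {α : Type*} [L.Structure α] {ι : Type*} (u : ι → α) : DatT L ι :=
  ⟨fun i j => u i = u j, fun p σ => Structure.RelMap p.2 (u ∘ σ)⟩

theorem dat_eq_iff {α β : Type*} [L.Structure α] [L.Structure β] {ι : Type*}
    {u : ι → α} {v : ι → β} :
    dat L u = dat L v ↔ ((∀ i j, u i = u j ↔ v i = v j) ∧
      ∀ (p : Σ n, L.Relations n) (σ : Fin p.1 → ι),
        Structure.RelMap p.2 (u ∘ σ) ↔ Structure.RelMap p.2 (v ∘ σ)) := by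
  constructor
  · intro h
    exact ⟨fun i j => iff_of_eq (congrFun (congrFun (congrArg Prod.fst h) i) j),
      fun p σ => iff_of_eq (congrFun (congrFun (congrArg Prod.snd h) p) σ)⟩
  · rintro ⟨h1, h2⟩
    exact Prod.ext (funext fun i => funext fun j => propext (h1 i j))
      (funext fun p => funext fun σ => propext (h2 p σ))

theorem dat_comp {α β : Type*} [L.Structure α] [L.Structure β] {ι ι' : Type*}
    {u : ι → α} {v : ι → β} (h : dat L u = dat L v) (σ : ι' → ι) :
    dat L (u ∘ σ) = dat L (v ∘ σ) := by
  rw [dat_eq_iff] at h ⊢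
  exact ⟨fun i j => h.1 (σ i) (σ j), fun p τ => h.2 p (σ ∘ τ)⟩

theorem dat_embedding {α β : Type*} [L.Structure α] [L.Structure β] (e : α ↪[L] β)
    {ι : Type*} (u : ι → α) : dat L (e ∘ u) = dat L u := by
  rw [dat_eq_iff]
  refine ⟨fun i j => ⟨fun h => e.injective h, fun h => congrArg e h⟩,
    fun p σ => e.map_rel p.2 (u ∘ σ)⟩

theorem dat_equiv {α β : Type*} [L.Structure α] [L.Structure β] (e : α ≃[L] β)
    {ι : Type*} (u : ι → α) : dat L (e ∘ u) = dat L u :=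
  dat_embedding e.toEmbedding u

/-- For a relational language, any subset is (the carrier of) a substructure. -/
def finSub (hrel : ∀ i, IsEmpty (L.Functions i)) (s : Set M) :
    L.Substructure M where
  carrier := s
  fun_mem := fun {n} f => (hrel n).elim f

@[simp] theorem mem_finSub {hrel : ∀ i, IsEmpty (L.Functions i)} {s : Set M} {x : M} :
    x ∈ finSub hrel s ↔ x ∈ s := Iff.rfl

theorem finSub_fg (hrel : ∀ i, IsEmpty (L.Functions i)) {s : Set M} (hs : s.Finite) :
    (finSub hrel s).FG := by
  rw [Substructure.fg_def]
  refine ⟨s, hs, le_antisymm ((Substructure.closure_le (S := finSub hrel s)).2 (le_refl _)) ?_⟩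
  intro x hx
  exact Substructure.subset_closure hx

/-- A finitely generated structure over a relational language is finite. -/
theorem finite_of_fg (hrel : ∀ i, IsEmpty (L.Functions i)) {α : Type*} [L.Structure α]
    (h : Structure.FG L α) : Finite α := by
  rw [Structure.fg_def, Substructure.fg_def] at h
  obtain ⟨s, hfin, hcl⟩ := h
  have : (⊤ : L.Substructure α) ≤ finSub hrel s := by
    rw [← hcl]
    exact (Substructure.closure_le (S := finSub hrel s)).2 (le_refl _)
  have hsub : (Set.univ : Set α) ⊆ s := fun x _ => this (Substructure.mem_top x)
  exact Set.finite_univ_iff.1 (hfin.subset hsub)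

/-- From matching atomic data of surjective enumerations, build an isomorphism. -/
theorem exists_iso (hrel : ∀ i, IsEmpty (L.Functions i))
    {α β : Type*} [L.Structure α] [L.Structure β]
    (jα : α ↪[L] M) (jβ : β ↪[L] M) {ι : Type*}
    (a : ι → α) (b : ι → β) (ha : Function.Surjective a) (hb : Function.Surjective b)
    (h : dat L (jα ∘ a) = dat L (jβ ∘ b)) : ∃ φ : α ≃[L] β, ∀ i, φ (a i) = b i := by
  rw [dat_eq_iff] at h
  have heq : ∀ i j, a i = a j ↔ b i = b j := by
    intro i j
    constructor
    · intro hij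
      exact jβ.injective ((h.1 i j).1 (congrArg jα hij))
    · intro hij
      exact jα.injective ((h.1 i j).2 (congrArg jβ hij))
  have hrelff : ∀ (n : ℕ) (r : L.Relations n) (σ : Fin n → ι),
      Structure.RelMap r (a ∘ σ) ↔ Structure.RelMap r (b ∘ σ) := by
    intro n r σ
    have h1 := jα.map_rel r (a ∘ σ)
    have h2 := jβ.map_rel r (b ∘ σ)
    have h3 := h.2 ⟨n, r⟩ σ
    exact h1.symm.trans (h3.trans h2)
  classical
  set F : α → β := fun x => b (Classical.choose (ha x)) with hF
  have hFa : ∀ i, F (a i) = b i := by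
    intro i
    have := Classical.choose_spec (ha (a i))
    exact (heq _ i).1 this
  set G : β → α := fun y => a (Classical.choose (hb y)) with hG
  have hGb : ∀ i, G (b i) = a i := by
    intro i
    have := Classical.choose_spec (hb (b i))
    exact (heq _ i).2 this
  have hGF : ∀ x, G (F x) = x := by
    intro x
    obtain ⟨i, rfl⟩ := ha x
    rw [hFa, hGb]
  have hFG : ∀ y, F (G y) = y := by
    intro y
    obtain ⟨i, rfl⟩ := hb y
    rw [hGb, hFa]
  refine ⟨⟨⟨F, G, hGF, hFG⟩, ?_, ?_⟩, hFa⟩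
  · intro n f
    exact (hrel n).elim f
  · intro n r x
    choose σ hσ using fun l => ha (x l)
    have hx : x = a ∘ σ := funext fun l => (hσ l).symm
    subst hx
    rw [show (⟨F, G, hGF, hFG⟩ : α ≃ β).toFun ∘ (a ∘ σ) = b ∘ σ from funext fun l => hFa (σ l)]
    exact (hrelff n r σ).symm

/-- From matching data of two finite tuples in an ultrahomogeneous structure,
we get an automorphism mapping one to the other. -/
theorem exists_auto (hrel : ∀ i, IsEmpty (L.Functions i))
    (hhom : L.IsUltrahomogeneous M) {ι : Type*} [Finite ι]
    (u v : ι → M) (h : dat L u = dat L v) : ∃ γ : M ≃[L] M, ∀ i, γ (u i) = v i := by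
  classical
  rw [dat_eq_iff] at h
  set S : L.Substructure M := finSub hrel (Set.range u) with hS
  have hmem : ∀ i, u i ∈ S := fun i => ⟨i, rfl⟩
  set jf : S → M := fun y => v (Classical.choose y.2) with hjf
  have hj : ∀ i, jf ⟨u i, hmem i⟩ = v i := by
    intro i
    have hc := Classical.choose_spec (⟨i, rfl⟩ : ∃ j, u j = u i)
    exact (h.1 _ i).1 hc
  have hinj : Function.Injective jf := by
    rintro ⟨y₁, hy₁⟩ ⟨y₂, hy₂⟩ hj12
    obtain ⟨i₁, rfl⟩ := hy₁
    obtain ⟨i₂, rfl⟩ := hy₂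
    simp only [hj] at hj12
    exact Subtype.ext ((h.1 i₁ i₂).2 hj12)
  have hrelmap : ∀ (n : ℕ) (r : L.Relations n) (x : Fin n → S),
      Structure.RelMap r (jf ∘ x) ↔ Structure.RelMap r x := by
    intro n r x
    choose σ hσ using fun l => (x l).2
    have hx : ∀ l, (x l : M) = u (σ l) := fun l => (hσ l).symm
    have h1 : Structure.RelMap (M := M) r (jf ∘ x) ↔ Structure.RelMap (M := M) r (v ∘ σ) := by
      refine iff_of_eq (congrArg _ (funext fun l => ?_))
      show jf (x l) = v (σ l)
      have : x l = ⟨u (σ l), hmem (σ l)⟩ := Subtype.ext (hx l)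
      rw [this, hj]
    have h2 : Structure.RelMap (M := S) r x ↔ Structure.RelMap (M := M) r (u ∘ σ) := by
      show Structure.RelMap (M := M) r (fun l => (x l : M)) ↔ _
      exact iff_of_eq (congrArg _ (funext fun l => hx l))
    rw [h1, h2]
    exact (h.2 ⟨n, r⟩ σ).symm
  set j : S ↪[L] M :=
    ⟨⟨jf, hinj⟩, fun {n} f => (hrel n).elim f, fun {n} r x => hrelmap n r x⟩ with hjdef
  obtain ⟨γ, hγ⟩ := hhom S (finSub_fg hrel (Set.finite_range u)) j
  refine ⟨γ, fun i => ?_⟩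
  have := congrFun (congrArg (DFunLike.coe) hγ) ⟨u i, hmem i⟩
  simp only [Embedding.comp_apply] at this
  rw [show γ (u i) = γ.toEmbedding (S.subtype ⟨u i, hmem i⟩) from rfl, ← this]
  exact hj i

/-- A self-equivalence of a finite set preserving a strict linear order is the identity. -/
theorem rigid_of_strict_order {α : Type*} [Finite α] (ρ : α → α → Prop)
    (htr : ∀ a b c, ρ a b → ρ b c → ρ a c) (hirr : ∀ a, ¬ρ a a)
    (htot : ∀ a b, ρ a b ∨ a = b ∨ ρ b a)
    (φ : α ≃ α) (hφ : ∀ a b, ρ (φ a) (φ b) ↔ ρ a b) : ∀ a, φ a = a := by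
  haveI : IsTrans α ρ := ⟨htr⟩
  haveI : IsIrrefl α ρ := ⟨hirr⟩
  have hwf : WellFounded ρ := Finite.wellFounded_of_trans_of_irrefl ρ
  intro a
  induction a using WellFounded.induction hwf with
  | _ a IH =>
    rcases htot (φ a) a with h | h | h
    · have := IH (φ a) h
      exact φ.injective this
    · exact h
    · have h' : ρ (φ (φ.symm a)) (φ a) := by rwa [Equiv.apply_symm_apply]
      have h'' : ρ (φ.symm a) a := (hφ _ _).1 h'
      have h4 := IH (φ.symm a) h''
      rw [Equiv.apply_symm_apply] at h4
      conv_lhs => rw [h4]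
      exact φ.apply_symm_apply a

theorem pair_comp {α β : Type*} (f : α → β) (x y : α) :
    (![f x, f y] : Fin 2 → β) = f ∘ ![x, y] := by
  funext l
  fin_cases l <;> rfl

/-- Isomorphisms between finite substructures of a linearly ordered structure are unique. -/
theorem iso_unique {r₀ : L.Relations 2}
    (hlin : IsLinearOrder M (fun a b => Structure.RelMap r₀ ![a, b]))
    {α β : Type*} [L.Structure α] [L.Structure β] [Finite α]
    (jα : α ↪[L] M) (φ ψ : α ≃[L] β) : φ = ψ := by
  set le : M → M → Prop := fun a b => Structure.RelMap r₀ ![a, b] with hle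
  set ρ : α → α → Prop := fun p q => le (jα p) (jα q) ∧ p ≠ q with hρ
  set θ : α ≃[L] α := ψ.symm.comp φ with hθ
  have keyiff : ∀ (e : α ≃[L] α) (a b : α), le (jα (e a)) (jα (e b)) ↔ le (jα a) (jα b) := by
    intro e a b
    have h1 : le (jα (e a)) (jα (e b)) ↔ Structure.RelMap (M := α) r₀ ![e a, e b] := by
      show Structure.RelMap r₀ ![jα (e a), jα (e b)] ↔ _
      rw [pair_comp jα (e a) (e b)]
      exact jα.map_rel r₀ ![e a, e b]
    have h2 : Structure.RelMap (M := α) r₀ ![e a, e b] ↔ Structure.RelMap (M := α) r₀ ![a, b] := by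
      rw [pair_comp e a b]
      exact e.map_rel r₀ ![a, b]
    have h3 : Structure.RelMap (M := α) r₀ ![a, b] ↔ le (jα a) (jα b) := by
      show _ ↔ Structure.RelMap r₀ ![jα a, jα b]
      rw [pair_comp jα a b]
      exact (jα.map_rel r₀ ![a, b]).symm
    rw [h1, h2, h3]
  have hid : ∀ a, θ a = a := by
    apply rigid_of_strict_order ρ
    · rintro a b c ⟨hab, hab'⟩ ⟨hbc, hbc'⟩
      refine ⟨hlin.trans _ _ _ hab hbc, ?_⟩
      rintro rfl
      exact hab' (jα.injective (hlin.antisymm _ _ hab hbc))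
    · rintro a ⟨-, h⟩
      exact h rfl
    · intro a b
      by_cases h : a = b
      · exact Or.inr (Or.inl h)
      · rcases hlin.total (jα a) (jα b) with h' | h'
        · exact Or.inl ⟨h', h⟩
        · exact Or.inr (Or.inr ⟨h', Ne.symm h⟩)
    · intro a b
      constructor
      · rintro ⟨h1, h2⟩
        exact ⟨(keyiff θ a b).1 h1, fun hab => h2 (by rw [hab])⟩
      · rintro ⟨h1, h2⟩
        exact ⟨(keyiff θ a b).2 h1, fun hab => h2 (θ.injective hab)⟩
  ext a
  have h5 : ψ.symm (φ a) = a := hid a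
  calc φ a = ψ (ψ.symm (φ a)) := (ψ.apply_symm_apply (φ a)).symm
  _ = ψ a := by rw [h5]

section Ramsey

variable {L : Language} {M : Type} [L.Structure M]

/-- Monochromaticity of the `g`-image data over moving base copies, within a set `T`. -/
def Mono (g : M → M) {s : ℕ} (c : Fin s → M) (sel : (Fin s → M) → M ≃[L] M)
    (d' : ℕ) (δ : DatT L (Fin s ⊕ Fin d')) (T : Set M) : Prop :=
  ∀ W₁ W₂ : Fin s ⊕ Fin d' → M,
    (∀ i, W₁ i ∈ T) → (∀ i, W₂ i ∈ T) →
    dat L W₁ = δ → dat L W₂ = δ →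
    dat L (Sum.elim (g ∘ c) (g ∘ fun i => sel (W₁ ∘ Sum.inl) (W₁ (Sum.inr i)))) =
      dat L (Sum.elim (g ∘ c) (g ∘ fun i => sel (W₂ ∘ Sum.inl) (W₂ (Sum.inr i))))

theorem Mono.mono {g : M → M} {s : ℕ} {c : Fin s → M} {sel : (Fin s → M) → M ≃[L] M}
    {d' : ℕ} {δ : DatT L (Fin s ⊕ Fin d')} {T T' : Set M} (hT : T' ⊆ T)
    (h : Mono g c sel d' δ T) : Mono g c sel d' δ T' :=
  fun W₁ W₂ h₁ h₂ => h W₁ W₂ (fun i => hT (h₁ i)) (fun i => hT (h₂ i))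

variable (hrel : ∀ i, IsEmpty (L.Functions i))
variable {r₀ : L.Relations 2}

theorem bnd_mem_age {s : Set M} (hs : s.Finite) :
    (⟨↥(finSub hrel s), inferInstance⟩ : CategoryTheory.Bundled L.Structure) ∈ L.age M := by
  constructor
  · exact (Substructure.fg_iff_structure_fg _).1 (finSub_fg hrel hs)
  · exact ⟨(finSub hrel s).subtype⟩

/-- The iterated Ramsey canonization: a copy of `A` on which the `g`-image data of tuples
in each of the given classes is constant. -/
theorem ramsey_iter (hfin : Finite (Σ n, L.Relations n))
    (hlin : IsLinearOrder M (fun a b => Structure.RelMap r₀ ![a, b]))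
    (hram : PaperDef.RamseyClass (L.age M))
    (g : M → M) {s : ℕ} (c : Fin s → M) (sel : (Fin s → M) → M ≃[L] M)
    (ps : List ((d' : ℕ) × DatT L (Fin s ⊕ Fin d'))) (A : Finset M) :
    ∃ θ : ↥(finSub hrel (A : Set M)) ↪[L] M,
      ∀ p ∈ ps, Mono g c sel p.1 p.2 (Set.range θ) := by
  classical
  haveI := hfin
  induction ps generalizing A with
  | nil => exact ⟨(finSub hrel (A : Set M)).subtype, by simp⟩
  | cons p ps IH =>
    by_cases hreal : ∃ W : Fin s ⊕ Fin p.1 → M, dat L W = p.2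
    case neg =>
      obtain ⟨θ, hθ⟩ := IH A
      refine ⟨θ, ?_⟩
      rintro q hq
      rcases List.mem_cons.1 hq with rfl | hq'
      · intro W₁ W₂ hW₁ hW₂ hdat₁ hdat₂
        exact absurd ⟨W₁, hdat₁⟩ hreal
      · exact hθ q hq'
    case pos =>
      obtain ⟨W₀, hW₀dat⟩ := hreal
      set PS : L.Substructure M := finSub hrel (Set.range W₀) with hPS
      set PB : CategoryTheory.Bundled L.Structure := ⟨↥PS, inferInstance⟩ with hPB
      have hPage : PB ∈ L.age M := bnd_mem_age hrel (Set.finite_range W₀)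
      have hHage : (⟨↥(finSub hrel (A : Set M)), inferInstance⟩ :
          CategoryTheory.Bundled L.Structure) ∈ L.age M :=
        bnd_mem_age hrel A.finite_toSet
      haveI : Fintype (DatT L (Fin s ⊕ Fin p.1)) := Fintype.ofFinite _
      set k := Fintype.card (DatT L (Fin s ⊕ Fin p.1)) with hkdef
      have hk : 1 ≤ k := Fintype.card_pos
      set eqk : DatT L (Fin s ⊕ Fin p.1) ≃ Fin k := Fintype.equivFin _ with heqk
      obtain ⟨SB, hSage, hRam⟩ := hram k hk _ hHage PB hPage
      haveI : Finite ↥SB := finite_of_fg hrel hSage.1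
      obtain ⟨ψ₀⟩ := hSage.2
      have hrange : (Set.range ψ₀).Finite := Set.finite_range _
      obtain ⟨θ', hθ'⟩ := IH hrange.toFinset
      have hmemB : ∀ x : ↥SB, ψ₀ x ∈ finSub hrel ((hrange.toFinset : Finset M) : Set M) := by
        intro x
        simp only [mem_finSub, Finset.coe_sort_coe, Finset.mem_coe, Set.Finite.mem_toFinset]
        exact ⟨x, rfl⟩
      set em : ↥SB ↪[L] M :=
        θ'.comp (FirstOrder.Language.Embedding.codRestrict (finSub hrel ((hrange.toFinset : Finset M) : Set M)) ψ₀
          hmemB) with hem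
      have hemrange : Set.range em ⊆ Set.range θ' := by
        rintro x ⟨y, rfl⟩
        exact ⟨_, rfl⟩
      set col : ((Fin s ⊕ Fin p.1) → M) → DatT L (Fin s ⊕ Fin p.1) := fun W =>
        dat L (Sum.elim (g ∘ c) (g ∘ fun i => sel (W ∘ Sum.inl) (W (Sum.inr i)))) with hcol
      set pEnum : (Fin s ⊕ Fin p.1) → ↥PS := fun i => ⟨W₀ i, ⟨i, rfl⟩⟩ with hpEnum
      have hpEnumSurj : Function.Surjective pEnum := by
        rintro ⟨x, ⟨i, rfl⟩⟩
        exact ⟨i, rfl⟩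
      haveI : Finite ↥PS := Finite.of_surjective pEnum hpEnumSurj
      set χ : {Q : L.Substructure ↥SB // Nonempty (PB ≃[L] ↥Q)} → Fin k := fun Q =>
        eqk (col (fun i => em (Q.1.subtype ((Classical.choice Q.2) (pEnum i))))) with hχ
      obtain ⟨e, hmono⟩ := hRam χ
      set θ : ↥(finSub hrel (A : Set M)) ↪[L] M := em.comp e with hθdef
      refine ⟨θ, ?_⟩
      -- key: analysis of tuples inside the image
      have key : ∀ W : (Fin s ⊕ Fin p.1) → M, (∀ i, W i ∈ Set.range θ) →
          dat L W = p.2 →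
          ∃ Q : {Q : L.Substructure ↥SB // Nonempty (PB ≃[L] ↥Q)},
            ((Q.1 : Set ↥SB) ⊆ Set.range e) ∧ χ Q = eqk (col W) := by
        intro W hWmem hWdat
        choose z hz using hWmem
        set sQ : (Fin s ⊕ Fin p.1) → ↥SB := fun i => e (z i) with hsQ
        set Q : L.Substructure ↥SB := finSub hrel (Set.range sQ) with hQ
        set tQ : (Fin s ⊕ Fin p.1) → ↥Q := fun i => ⟨sQ i, ⟨i, rfl⟩⟩ with htQ
        have htQsurj : Function.Surjective tQ := by
          rintro ⟨x, ⟨i, rfl⟩⟩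
          exact ⟨i, rfl⟩
        have hemtQ : ∀ i, (em.comp Q.subtype) (tQ i) = W i := by
          intro i
          show em (sQ i) = W i
          rw [hsQ]
          exact hz i
        have hdat1 : dat L (PS.subtype ∘ pEnum) = dat L ((em.comp Q.subtype) ∘ tQ) := by
          have e1 : PS.subtype ∘ pEnum = W₀ := rfl
          have e2 : (em.comp Q.subtype) ∘ tQ = W := funext hemtQ
          rw [e1, e2, hW₀dat, hWdat]
        obtain ⟨φ, hφ⟩ := exists_iso hrel PS.subtype (em.comp Q.subtype) pEnum tQ
          hpEnumSurj htQsurj hdat1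
        have hQsub : (Q : Set ↥SB) ⊆ Set.range e := by
          rintro x ⟨i, rfl⟩
          exact ⟨z i, rfl⟩
        refine ⟨⟨Q, ⟨φ⟩⟩, hQsub, ?_⟩
        have huniq : Classical.choice (⟨φ⟩ : Nonempty (PB ≃[L] ↥Q)) = φ :=
          iso_unique hlin PS.subtype _ φ
        rw [hχ]
        simp only [huniq]
        congr 1
        congr 1
        funext i
        rw [hφ i]
        exact hemtQ i
      rintro q hq
      rcases List.mem_cons.1 hq with rfl | hq'
      · intro W₁ W₂ hW₁ hW₂ hdat₁ hdat₂
        obtain ⟨Q₁, hQ₁sub, hQ₁val⟩ := key W₁ hW₁ hdat₁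
        obtain ⟨Q₂, hQ₂sub, hQ₂val⟩ := key W₂ hW₂ hdat₂
        have := hmono Q₁ Q₂ hQ₁sub hQ₂sub
        rw [hQ₁val, hQ₂val] at this
        exact eqk.injective this
      · refine (hθ' q hq').mono ?_
        rintro x ⟨y, rfl⟩
        exact hemrange ⟨e y, rfl⟩

/-- Pointed canonization on finite sets: there is an automorphism `β` fixing `c` pointwise
such that on `β '' A` the image data under `g` of a tuple (jointly with the `g`-image of `c`)
depends only on the joint data of the tuple with `c`. -/
theorem pointed_canon (hrel : ∀ i, IsEmpty (L.Functions i))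
    (hfin : Finite (Σ n, L.Relations n))
    (hlin : IsLinearOrder M (fun a b => Structure.RelMap r₀ ![a, b]))
    (hhom : L.IsUltrahomogeneous M)
    (hram : PaperDef.RamseyClass (L.age M))
    (g : M → M) {s : ℕ} (c : Fin s → M) (D : ℕ) (A : Finset M) :
    ∃ β : M ≃[L] M, (∀ i, β (c i) = c i) ∧
      ∀ (d' : ℕ), d' ≤ D → ∀ u v : Fin d' → M,
        (∀ i, u i ∈ β '' (A : Set M)) → (∀ i, v i ∈ β '' (A : Set M)) →
        dat L (Sum.elim c u) = dat L (Sum.elim c v) →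
        dat L (Sum.elim (g ∘ c) (g ∘ u)) = dat L (Sum.elim (g ∘ c) (g ∘ v)) := by
  classical
  haveI := hfin
  -- the selector of automorphisms moving copies of `c` back to `c`
  set sel : (Fin s → M) → M ≃[L] M := fun c' =>
    if h : dat L c' = dat L c then (exists_auto hrel hhom c' c h).choose
    else Language.Equiv.refl L M with hseldef
  have hsel : ∀ (c' : Fin s → M) (h : dat L c' = dat L c) (i : Fin s), sel c' (c' i) = c i := by
    intro c' h i
    rw [hseldef]
    simp only [dif_pos h]
    exact (exists_auto hrel hhom c' c h).choose_spec i
  -- the list of all classes of arities at most `D`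
  haveI : ∀ d' : ℕ, Fintype (DatT L (Fin s ⊕ Fin d')) := fun d' => Fintype.ofFinite _
  set ps : List ((d' : ℕ) × DatT L (Fin s ⊕ Fin d')) :=
    (List.range (D + 1)).flatMap (fun d' =>
      (Finset.univ (α := DatT L (Fin s ⊕ Fin d'))).toList.map (fun δ => ⟨d', δ⟩)) with hpsdef
  have hps : ∀ (d' : ℕ), d' ≤ D → ∀ δ : DatT L (Fin s ⊕ Fin d'), (⟨d', δ⟩ :
      (d' : ℕ) × DatT L (Fin s ⊕ Fin d')) ∈ ps := by
    intro d' hd' δ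
    rw [hpsdef, List.mem_flatMap]
    refine ⟨d', List.mem_range.2 (Nat.lt_succ_of_le hd'), ?_⟩
    rw [List.mem_map]
    exact ⟨δ, Finset.mem_toList.2 (Finset.mem_univ δ), rfl⟩
  set A' : Finset M := A ∪ (Set.finite_range c).toFinset with hA'
  obtain ⟨θ, hθ⟩ := ramsey_iter hrel hfin hlin hram g c sel ps A'
  have cmem : ∀ i, c i ∈ finSub hrel (A' : Set M) := by
    intro i
    show c i ∈ (A' : Set M)
    rw [hA']
    simp only [Finset.coe_union, Set.mem_union, Finset.mem_coe, Set.Finite.coe_toFinset]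
    exact Or.inr ⟨i, rfl⟩
  set ctup : Fin s → ↥(finSub hrel (A' : Set M)) := fun i => ⟨c i, cmem i⟩ with hctup
  set cstar : Fin s → M := fun i => θ (ctup i) with hcstar
  have hdatcs : dat L cstar = dat L c := by
    have h1 : dat L (θ ∘ ctup) = dat L ctup := dat_embedding θ ctup
    have h2 : dat L ((finSub hrel (A' : Set M)).subtype ∘ ctup) = dat L ctup :=
      dat_embedding _ ctup
    have h3 : (finSub hrel (A' : Set M)).subtype ∘ ctup = c := rfl
    rw [h3] at h2
    rw [show cstar = θ ∘ ctup from rfl, h1, ← h2]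
  set γstar : M ≃[L] M := sel cstar with hγstar
  have hγc : ∀ i, γstar (cstar i) = c i := hsel cstar hdatcs
  set em2 : ↥(finSub hrel (A' : Set M)) ↪[L] M := γstar.toEmbedding.comp θ with hem2
  obtain ⟨β, hβ⟩ := hhom _ (finSub_fg hrel A'.finite_toSet) em2
  have hβpt : ∀ (x : M) (hx : x ∈ finSub hrel (A' : Set M)), β x = em2 ⟨x, hx⟩ := by
    intro x hx
    have := congrFun (congrArg (DFunLike.coe) hβ) ⟨x, hx⟩
    simp only [Embedding.comp_apply] at this
    exact this.symm
  have hβc : ∀ i, β (c i) = c i := by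
    intro i
    rw [hβpt (c i) (cmem i)]
    show γstar (θ (ctup i)) = c i
    exact hγc i
  refine ⟨β, hβc, ?_⟩
  intro d' hd' u v hu hv hdat
  -- pull back the tuples along `γstar`
  have hAA' : (A : Set M) ⊆ (A' : Set M) := by
    rw [hA']
    intro x hx
    simp only [Finset.coe_union, Set.mem_union, Finset.mem_coe]
    exact Or.inl hx
  have pull : ∀ u : Fin d' → M, (∀ i, u i ∈ β '' (A : Set M)) →
      ∃ ut : Fin d' → ↥(finSub hrel (A' : Set M)),
        ∀ i, γstar (θ (ut i)) = u i := by
    intro u hu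
    choose a ha hba using hu
    refine ⟨fun i => ⟨a i, hAA' (ha i)⟩, fun i => ?_⟩
    have : β (a i) = em2 ⟨a i, hAA' (ha i)⟩ := hβpt _ _
    rw [← hba i, this]
    rfl
  obtain ⟨ut, hut⟩ := pull u hu
  obtain ⟨vt, hvt⟩ := pull v hv
  set W₁ : Fin s ⊕ Fin d' → M := Sum.elim cstar (fun i => θ (ut i)) with hW₁
  set W₂ : Fin s ⊕ Fin d' → M := Sum.elim cstar (fun i => θ (vt i)) with hW₂
  have hγW₁ : γstar ∘ W₁ = Sum.elim c u := by
    funext i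
    rcases i with i | i
    · exact hγc i
    · exact hut i
  have hγW₂ : γstar ∘ W₂ = Sum.elim c v := by
    funext i
    rcases i with i | i
    · exact hγc i
    · exact hvt i
  have hdW₁ : dat L W₁ = dat L (Sum.elim c u) := by
    rw [← hγW₁]
    exact (dat_equiv γstar W₁).symm
  have hdW₂ : dat L W₂ = dat L (Sum.elim c u) := by
    rw [hdat, ← hγW₂]
    exact (dat_equiv γstar W₂).symm
  have hmem₁ : ∀ i, W₁ i ∈ Set.range θ := by
    rintro (i | i)
    · exact ⟨ctup i, rfl⟩
    · exact ⟨ut i, rfl⟩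
  have hmem₂ : ∀ i, W₂ i ∈ Set.range θ := by
    rintro (i | i)
    · exact ⟨ctup i, rfl⟩
    · exact ⟨vt i, rfl⟩
  have hmono := hθ ⟨d', dat L (Sum.elim c u)⟩ (hps d' hd' _) W₁ W₂ hmem₁ hmem₂ hdW₁ hdW₂
  have hWinl₁ : W₁ ∘ Sum.inl = cstar := rfl
  have hWinl₂ : W₂ ∘ Sum.inl = cstar := rfl
  have hsel₁ : (fun i => sel (W₁ ∘ Sum.inl) (W₁ (Sum.inr i))) = u := by
    funext i
    rw [hWinl₁]
    exact hut i
  have hsel₂ : (fun i => sel (W₂ ∘ Sum.inl) (W₂ (Sum.inr i))) = v := by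
    funext i
    rw [hWinl₂]
    exact hvt i
  rw [hsel₁, hsel₂] at hmono
  exact hmono

/-- Dependent chain construction along `ℕ`. -/
theorem nat_chain {α : ℕ → Type*} (P : ∀ n, α n → Prop) (R : ∀ n, α n → α (n + 1) → Prop)
    (h0 : ∃ a, P 0 a) (hstep : ∀ n a, P n a → ∃ b, P (n + 1) b ∧ R n a b) :
    ∃ V : ∀ n, α n, (∀ n, P n (V n)) ∧ ∀ n, R n (V n) (V (n + 1)) := by
  classical
  choose f hf1 hf2 using hstep
  obtain ⟨a0, ha0⟩ := h0
  let V : ∀ n, {a : α n // P n a} := fun n =>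
    Nat.rec ⟨a0, ha0⟩ (fun n p => ⟨f n p.1 p.2, hf1 n p.1 p.2⟩) n
  exact ⟨fun n => (V n).1, fun n => (V n).2, fun n => hf2 n (V n).1 (V n).2⟩

/-- Extraction of an ultrafilter-generic value of a finitely-valued sequence. -/
theorem exists_generic {β : Type*} [Finite β] (U : Ultrafilter ℕ) (F : ℕ → β) :
    ∃ t : β, {k | F k = t} ∈ U := by
  by_contra h
  push_neg at h
  have h' : ∀ t : β, {k | F k = t}ᶜ ∈ U := fun t =>
    (Ultrafilter.compl_mem_iff_notMem).2 (h t)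
  have : (⋂ t : β, {k | F k = t}ᶜ) ∈ U := Filter.iInter_mem.2 h'
  obtain ⟨k, hk⟩ := Ultrafilter.nonempty_of_mem this
  simp only [Set.mem_iInter, Set.mem_compl_iff, Set.mem_setOf_eq] at hk
  exact hk (F k) rfl

/-- The limit construction: a function `f` agreeing with `g` on `c`, locally interpolated by
`γ ∘ g ∘ β` with automorphisms `γ, β`, and canonical over `c` at arities at most `D`. -/
theorem exists_limit [Countable M] [Infinite M] (hrel : ∀ i, IsEmpty (L.Functions i))
    (hfin : Finite (Σ n, L.Relations n))
    (hlin : IsLinearOrder M (fun a b => Structure.RelMap r₀ ![a, b]))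
    (hhom : L.IsUltrahomogeneous M)
    (hram : PaperDef.RamseyClass (L.age M))
    (g : M → M) {s : ℕ} (c : Fin s → M) (D : ℕ) :
    ∃ f : M → M,
      (∀ i, f (c i) = g (c i)) ∧
      (∀ F : Set M, F.Finite → ∃ γ β : M ≃[L] M, ∀ x ∈ F, f x = γ (g (β x))) ∧
      (∀ d' : ℕ, d' ≤ D → ∀ u v : Fin d' → M,
        dat L (Sum.elim c u) = dat L (Sum.elim c v) → dat L (f ∘ u) = dat L (f ∘ v)) := by
  classical
  haveI := hfin
  obtain ⟨de⟩ := nonempty_denumerable M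
  set e : ℕ ≃ M := (Denumerable.eqv M).symm with he
  set w : ℕ → M := fun n => if h : n < s then c ⟨n, h⟩ else e (n - s) with hw
  have hwc : ∀ i : Fin s, w i = c i := by
    intro i
    simp only [hw, i.isLt, dif_pos, Fin.eta]
  have hwe : ∀ x : M, w (s + e.symm x) = x := by
    intro x
    simp only [hw]
    rw [dif_neg (by omega), Nat.add_sub_cancel_left]
    simp
  set Ak : ℕ → Finset M := fun k =>
    (Finset.range (k + 1)).image w ∪ (Set.finite_range c).toFinset with hAk
  have hAkw : ∀ k n, n ≤ k → w n ∈ Ak k := by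
    intro k n hn
    simp only [hAk, Finset.mem_union, Finset.mem_image, Finset.mem_range]
    exact Or.inl ⟨n, by omega, rfl⟩
  choose B hBc hBcan using fun k =>
    pointed_canon hrel hfin hlin hhom hram g c D (Ak k)
  set hh : ℕ → M → M := fun k => g ∘ (B k) with hhh
  set U : Ultrafilter ℕ := Filter.hyperfilter ℕ with hU
  choose t ht using fun n : ℕ =>
    exists_generic U (fun k => dat L (fun i : Fin (n + 1) => hh k (w i)))
  have hhc : ∀ k (i : ℕ), i < s → hh k (w i) = g (w i) := by
    intro k i hi
    show g (B k (w i)) = g (w i)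
    have hwi : w i = c ⟨i, hi⟩ := by simp only [hw, hi, dif_pos]
    rw [hwi, hBc k ⟨i, hi⟩]
  set P : ∀ m : ℕ, (Fin (s + m + 1) → M) → Prop := fun m vs =>
    dat L vs = t (s + m) ∧ (∀ i : Fin (s + m + 1), (i : ℕ) < s → vs i = g (w i)) ∧
      ∃ (k : ℕ) (γ : M ≃[L] M), s + m ≤ k ∧ ∀ i : Fin (s + m + 1), vs i = γ (hh k (w i))
      with hP
  have hbase : ∃ vs : Fin (s + 0 + 1) → M, P 0 vs := by
    have hmem : {k | dat L (fun i : Fin (s + 0 + 1) => hh k (w i)) = t (s + 0)} ∩ {k | s ≤ k}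
        ∈ U := by
      refine Filter.inter_mem (ht (s + 0)) ?_
      exact Filter.mem_hyperfilter_of_finite_compl (Set.Finite.subset (Set.finite_Iio s)
        (by intro k hk; simp at hk ⊢; omega))
    obtain ⟨k₀, hk₀t, hk₀s⟩ := Ultrafilter.nonempty_of_mem hmem
    have hk₀s' : s ≤ k₀ := hk₀s
    refine ⟨fun i => hh k₀ (w i), hk₀t, ?_, k₀, Language.Equiv.refl L M, by omega,
      fun i => rfl⟩
    intro i hi
    exact hhc k₀ i hi
  have hstep : ∀ m (vs : Fin (s + m + 1) → M), P m vs →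
      ∃ vs' : Fin (s + (m + 1) + 1) → M, P (m + 1) vs' ∧
        ∀ i : Fin (s + m + 1), vs' i.castSucc = vs i := by
    intro m vs hvs
    obtain ⟨hdat, hlow, -⟩ := hvs
    have hmem : {k | dat L (fun i : Fin (s + m + 1) => hh k (w i)) = t (s + m)} ∩
        ({k | dat L (fun i : Fin (s + (m + 1) + 1) => hh k (w i)) = t (s + (m + 1))} ∩
          {k | s + (m + 1) ≤ k}) ∈ U := by
      refine Filter.inter_mem (ht (s + m)) (Filter.inter_mem (ht (s + (m + 1))) ?_)
      exact Filter.mem_hyperfilter_of_finite_compl (Set.Finite.subset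
        (Set.finite_Iio (s + (m + 1))) (by intro k hk; simp at hk ⊢; omega))
    obtain ⟨k, hk1, hk2, hk3⟩ := Ultrafilter.nonempty_of_mem hmem
    have hdd : dat L (fun i : Fin (s + m + 1) => hh k (w i)) = dat L vs := by
      rw [Set.mem_setOf_eq] at hk1
      rw [hk1, hdat]
    obtain ⟨γ, hγ⟩ := exists_auto hrel hhom _ _ hdd
    refine ⟨fun i => γ (hh k (w i)), ⟨?_, ?_, k, γ, hk3, fun i => rfl⟩, ?_⟩
    · have hcomp : (fun i : Fin (s + (m + 1) + 1) => γ (hh k (w i))) =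
        γ ∘ (fun i : Fin (s + (m + 1) + 1) => hh k (w i)) := rfl
      rw [hcomp, dat_equiv]
      exact hk2
    · intro i hi
      exact (hγ ⟨i, by omega⟩).trans (hlow ⟨i, by omega⟩ hi)
    · intro i
      show γ (hh k (w i.castSucc)) = vs i
      have hcs : ((i.castSucc : Fin (s + (m + 1) + 1)) : ℕ) = (i : ℕ) := rfl
      rw [hcs]
      exact hγ i
  obtain ⟨V, hVP, hVR⟩ := nat_chain P (fun m a b => ∀ i : Fin (s + m + 1), b i.castSucc = a i)
    hbase hstep
  have hVmono : ∀ m m' (h : m ≤ m') (i : Fin (s + m + 1)),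
      V m' ⟨i, by omega⟩ = V m i := by
    intro m m' h
    induction m' with
    | zero =>
      intro i
      have hm0 : m = 0 := by omega
      subst hm0
      rfl
    | succ m' IH =>
      intro i
      rcases Nat.lt_or_ge m (m' + 1) with h' | h'
      · have hm : m ≤ m' := by omega
        have h2 := hVR m' ⟨i, by omega⟩
        have h3 : ((⟨i, by omega⟩ : Fin (s + m' + 1)).castSucc : Fin (s + (m' + 1) + 1)) =
            ⟨i, by omega⟩ := rfl
        rw [h3] at h2
        rw [h2]
        exact IH hm i
      · have hm : m = m' + 1 := by omega
        subst hm
        rfl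
  have hVeq : ∀ m (i j : Fin (s + m + 1)), w i = w j → V m i = V m j := by
    intro m i j hij
    obtain ⟨-, -, k, γ, -, hform⟩ := hVP m
    rw [hform i, hform j, hij]
  set f : M → M := fun x => V (e.symm x) ⟨s + e.symm x, by omega⟩ with hf
  have hfw : ∀ m (i : Fin (s + m + 1)), f (w i) = V m i := by
    intro m i
    simp only [hf]
    have h1 : V (e.symm (w i)) ⟨s + e.symm (w i), by omega⟩ =
        V (max m (e.symm (w i))) ⟨s + e.symm (w i), by omega⟩ :=
      (hVmono _ _ (le_max_right m _) _).symm
    have h2 : V m i = V (max m (e.symm (w i))) ⟨i, by omega⟩ :=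
      (hVmono m _ (le_max_left m _) i).symm
    rw [h1, h2]
    apply hVeq
    show w (s + e.symm (w i)) = w i
    exact hwe (w i)
  refine ⟨f, ?_, ?_, ?_⟩
  · intro i
    have hidx : (i : ℕ) < s + 0 + 1 := by omega
    have h1 : f (w i) = V 0 ⟨i, hidx⟩ := hfw 0 ⟨i, hidx⟩
    have h2 := (hVP 0).2.1 ⟨i, hidx⟩ i.isLt
    rw [hwc i] at h1
    rw [h1, h2]
    show g (w i) = g (c i)
    rw [hwc i]
  · intro F hF
    by_cases hFe : F.Nonempty
    case neg =>
      refine ⟨Language.Equiv.refl L M, Language.Equiv.refl L M, fun x hx => ?_⟩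
      exact absurd ⟨x, hx⟩ hFe
    case pos =>
      set m := hF.toFinset.sup (fun x => e.symm x) with hm
      obtain ⟨-, -, k, γ, -, hform⟩ := hVP m
      refine ⟨γ, B k, fun x hx => ?_⟩
      have hxm : e.symm x ≤ m := Finset.le_sup (hF.mem_toFinset.2 hx)
      have hidx : s + e.symm x < s + m + 1 := by omega
      have h1 : f x = V m ⟨s + e.symm x, hidx⟩ := by
        have h0 := hfw m ⟨s + e.symm x, hidx⟩
        rw [hwe x] at h0
        exact h0
      rw [h1, hform ⟨s + e.symm x, hidx⟩]
      show γ (hh k (w (s + e.symm x))) = γ (g (B k x))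
      rw [hwe x]
      rfl
  · intro d' hd' u v hdatuv
    set m := (Finset.univ.sup fun i => e.symm (u i)) ⊔
      (Finset.univ.sup fun i => e.symm (v i)) with hm
    have hum : ∀ i, e.symm (u i) ≤ m := by
      intro i
      rw [hm]
      exact le_trans (Finset.le_sup (f := fun i => e.symm (u i)) (Finset.mem_univ i)) le_sup_left
    have hvm : ∀ i, e.symm (v i) ≤ m := by
      intro i
      rw [hm]
      exact le_trans (Finset.le_sup (f := fun i => e.symm (v i)) (Finset.mem_univ i)) le_sup_right
    obtain ⟨-, -, k, γ, hkm, hform⟩ := hVP m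
    have hfu : ∀ (u : Fin d' → M), (∀ i, e.symm (u i) ≤ m) →
        f ∘ u = γ ∘ (g ∘ ((B k) ∘ u)) := by
      intro u hum
      funext i
      have hidx : s + e.symm (u i) < s + m + 1 := by have := hum i; omega
      have h1 : f (u i) = V m ⟨s + e.symm (u i), hidx⟩ := by
        have h0 := hfw m ⟨s + e.symm (u i), hidx⟩
        rw [hwe (u i)] at h0
        exact h0
      show f (u i) = γ (g (B k (u i)))
      rw [h1, hform ⟨s + e.symm (u i), hidx⟩]
      show γ (hh k (w (s + e.symm (u i)))) = _
      rw [hwe (u i)]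
      rfl
    have hfu1 := hfu u hum
    have hfu2 := hfu v hvm
    have hmemu : ∀ (u : Fin d' → M), (∀ i, e.symm (u i) ≤ m) →
        ∀ i, ((B k) ∘ u) i ∈ ⇑(B k) '' ((Ak k : Set M)) := by
      intro u hum i
      refine ⟨u i, ?_, rfl⟩
      have h0 : u i = w (s + e.symm (u i)) := (hwe (u i)).symm
      rw [h0]
      exact hAkw k _ (by have := hum i; omega)
    have htrans : ∀ (u : Fin d' → M), Sum.elim c (⇑(B k) ∘ u) = ⇑(B k) ∘ (Sum.elim c u) := by
      intro u
      funext x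
      rcases x with i | i
      · exact (hBc k i).symm
      · rfl
    have hdat' : dat L (Sum.elim c (⇑(B k) ∘ u)) = dat L (Sum.elim c (⇑(B k) ∘ v)) := by
      rw [htrans u, htrans v, dat_equiv, dat_equiv]
      exact hdatuv
    have hcan := hBcan k d' hd' (⇑(B k) ∘ u) (⇑(B k) ∘ v) (hmemu u hum) (hmemu v hvm) hdat'
    have h5 : dat L (g ∘ (⇑(B k) ∘ u)) = dat L (g ∘ (⇑(B k) ∘ v)) := by
      have h6 := dat_comp hcan Sum.inr
      exact h6
    calc dat L (f ∘ u) = dat L (γ ∘ (g ∘ (⇑(B k) ∘ u))) := by rw [hfu1]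
    _ = dat L (g ∘ (⇑(B k) ∘ u)) := dat_equiv γ _
    _ = dat L (g ∘ (⇑(B k) ∘ v)) := h5
    _ = dat L (γ ∘ (g ∘ (⇑(B k) ∘ v))) := (dat_equiv γ _).symm
    _ = dat L (f ∘ v) := by rw [hfu2]

end Ramsey

section Transfer

variable {L' : Language}

theorem sameType_of_dat (hrel : ∀ i, IsEmpty (L.Functions i)) (hhom : L.IsUltrahomogeneous M)
    {n : ℕ} (u v : Fin n → M) (h : dat L u = dat L v) : PaperDef.SameType L M u v := by
  obtain ⟨γ, hγ⟩ := exists_auto hrel hhom u v h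
  intro φ
  have hvy : v = ⇑γ ∘ u := funext fun i => (hγ i).symm
  rw [hvy]
  exact (StrongHomClass.realize_formula γ φ).symm

theorem relMap_auto [L'.Structure M] (hred : PaperDef.IsReduct L L' M) (γ : M ≃[L] M)
    {n : ℕ} (r : L'.Relations n) (x : Fin n → M) :
    Structure.RelMap r (fun i => γ (x i)) ↔ Structure.RelMap r x := by
  obtain ⟨φ, hφ⟩ := hred n r
  rw [hφ, hφ]
  exact StrongHomClass.realize_formula γ φ

theorem auto_isEndo [L'.Structure M] (hred : PaperDef.IsReduct L L' M) (γ : M ≃[L] M) :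
    PaperDef.IsEndo L' M ⇑γ :=
  fun n r x hx => (relMap_auto hred γ r x).2 hx

theorem dat_of_sameType_const {nT : ℕ} (c : Fin nT → M) {n : ℕ} (a b : Fin n → M)
    (h : @PaperDef.SameType (L[[Fin nT]]) M (PaperDef.withConstantsStruct L c) n a b) :
    dat L (Sum.elim c a) = dat L (Sum.elim c b) := by
  letI : (L[[Fin nT]]).Structure M := PaperDef.withConstantsStruct L c
  set trm : (Fin nT ⊕ Fin n) → (L[[Fin nT]]).Term (Fin n) :=
    Sum.elim (fun j => (L.con j).term) (fun i => Term.var i) with htrm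
  have hreal : ∀ (z : Fin n → M) (x : Fin nT ⊕ Fin n),
      (trm x).realize z = Sum.elim c z x := by
    rintro z (j | i) <;> rfl
  rw [dat_eq_iff]
  constructor
  · intro x y
    have h1 := h (Term.equal (trm x) (trm y))
    rw [Formula.realize_equal, Formula.realize_equal, hreal a x, hreal a y,
      hreal b x, hreal b y] at h1
    exact h1
  · intro p σ
    have h1 := h (Relations.formula (Sum.inl p.2) (fun l => trm (σ l)))
    erw [Formula.realize_rel, Formula.realize_rel] at h1
    have e1 : ∀ z : Fin n → M, (fun l => (trm (σ l)).realize z) = (Sum.elim c z) ∘ σ :=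
      fun z => funext fun l => hreal z (σ l)
    rw [e1 a, e1 b] at h1
    exact h1

theorem arity_bound (hfin : Finite (Σ n, L.Relations n)) :
    ∃ DL : ℕ, ∀ m : ℕ, Nonempty (L.Relations m) → m ≤ DL := by
  haveI := hfin
  have hfr : (Set.range (fun p : Σ n, L.Relations n => p.1)).Finite := Set.finite_range _
  obtain ⟨DL, hDL⟩ := hfr.bddAbove
  exact ⟨DL, fun m hm => hDL ⟨⟨m, hm.some⟩, rfl⟩⟩

theorem dat_image_of_canon {s : ℕ} {c : Fin s → M} {f : M → M} {D : ℕ}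
    (hD2 : 2 ≤ D) (hDL : ∀ m : ℕ, Nonempty (L.Relations m) → m ≤ D)
    (hcanon : ∀ d' : ℕ, d' ≤ D → ∀ u v : Fin d' → M,
      dat L (Sum.elim c u) = dat L (Sum.elim c v) → dat L (f ∘ u) = dat L (f ∘ v))
    {n : ℕ} (a b : Fin n → M) (h : dat L (Sum.elim c a) = dat L (Sum.elim c b)) :
    dat L (f ∘ a) = dat L (f ∘ b) := by
  have hsub : ∀ (m : ℕ) (σ : Fin m → Fin n),
      dat L (Sum.elim c (a ∘ σ)) = dat L (Sum.elim c (b ∘ σ)) := by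
    intro m σ
    have e1 : ∀ z : Fin n → M, Sum.elim c (z ∘ σ) = (Sum.elim c z) ∘ (Sum.map id σ) := by
      intro z
      funext x
      rcases x with j | i <;> rfl
    rw [e1 a, e1 b]
    exact dat_comp h _
  rw [dat_eq_iff]
  constructor
  · intro i j
    have h2 := hcanon 2 hD2 (a ∘ ![i, j]) (b ∘ ![i, j]) (hsub 2 ![i, j])
    rw [dat_eq_iff] at h2
    have h3 := h2.1 0 1
    simpa using h3
  · intro p σ
    have hm : p.1 ≤ D := hDL p.1 ⟨p.2⟩
    have h2 := hcanon p.1 hm (a ∘ σ) (b ∘ σ) (hsub p.1 σ)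
    rw [dat_eq_iff] at h2
    exact h2.2 p id

end Transfer

section Monoid

theorem genBy_closed {D : Type*} (A : Set (D → D)) :
    PaperDef.IsClosedTransMonoid (PaperDef.ClosedMonoidGenBy A) := by
  refine ⟨?_, ?_, ?_⟩
  · exact Set.mem_sInter.2 fun S hS => hS.1.1
  · intro g h hg hh
    exact Set.mem_sInter.2 fun S hS =>
      hS.1.2.1 g h (Set.mem_sInter.1 hg S hS) (Set.mem_sInter.1 hh S hS)
  · intro g hg
    refine Set.mem_sInter.2 fun S hS => hS.1.2.2 g ?_
    intro F hF
    obtain ⟨h, hh, hagree⟩ := hg F hF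
    exact ⟨h, Set.mem_sInter.1 hh S hS, hagree⟩

theorem subset_genBy {D : Type*} (A : Set (D → D)) :
    A ⊆ PaperDef.ClosedMonoidGenBy A :=
  fun x hx => Set.mem_sInter.2 fun _ hS => hS.2 hx

theorem genBy_subset {D : Type*} {A N : Set (D → D)}
    (hN : PaperDef.IsClosedTransMonoid N) (hAN : A ⊆ N) :
    PaperDef.ClosedMonoidGenBy A ⊆ N :=
  fun _ hx => Set.mem_sInter.1 hx N ⟨hN, hAN⟩

end Monoid


end CanonAux


namespace PaperDef
/-- **Lemma 8 of the paper.**  Let `Θ` (an `L'`-structure on `M`) with finite relational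
signature be a reduct of a countably infinite ordered homogeneous Ramsey structure `Δ`
(an `L`-structure on `M`) with finite relational signature, and let `N` be a closed
transformation monoid minimal above `End(Θ)`.  Then there are constants `c₁, …, c_{n(Θ)}`
(where `n(Θ)` is the maximal arity of the relations of `Θ`) and a function `f` canonical
from `(Δ, c₁, …, c_{n(Θ)})` to `Δ` such that `N` is the smallest closed transformation
monoid containing `End(Θ)` and `f`. -/
theorem minimal_monoid_generated_by_canonical_function
    (L L' : Language) (M : Type) [L.Structure M] [L'.Structure M] [Countable M] [Infinite M]
    (hLrel : ∀ i, IsEmpty (L.Functions i)) (hLfin : Finite (Σ i, L.Relations i))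
    (hTrel : ∀ i, IsEmpty (L'.Functions i)) (hTfin : Finite (Σ i, L'.Relations i))
    (hord : Ordered L M) (hhom : L.IsUltrahomogeneous M) (hram : RamseyClass (L.age M))
    (hred : IsReduct L L' M)
    (nT : ℕ) (hnT : IsGreatest {k : ℕ | Nonempty (L'.Relations k)} nT)
    (N : Set (M → M)) (hclosed : IsClosedTransMonoid N)
    (hmin : MinimalMonoidAbove (EndSet L' M) N) :
    ∃ (c : Fin nT → M) (f : M → M),
      @Canonical (L[[Fin nT]]) L M M (withConstantsStruct L c) _ f ∧
      N = ClosedMonoidGenBy (EndSet L' M ∪ {f}) := by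
  classical
  obtain ⟨r₀, hlin⟩ := hord
  -- pick `g` in `N` that is not an endomorphism of `Θ`
  obtain ⟨g, hgN, hgE⟩ := Set.exists_of_ssubset hmin.1
  -- a violated relation
  have hviol : ∃ (m : ℕ) (r : L'.Relations m) (x : Fin m → M),
      Structure.RelMap r x ∧ ¬Structure.RelMap r (fun i => g (x i)) := by
    by_contra hcon
    push_neg at hcon
    exact hgE fun n r x => hcon n r x
  obtain ⟨m, r, x, hrx, hnrgx⟩ := hviol
  have hm0 : 0 < m := by
    rcases Nat.eq_zero_or_pos m with h0 | h
    · subst h0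
      exfalso
      apply hnrgx
      have hxx : (fun i : Fin 0 => g (x i)) = x := funext fun i => i.elim0
      rw [hxx]
      exact hrx
    · exact h
  have hmnT : m ≤ nT := hnT.2 ⟨r⟩
  -- the base tuple: `x` padded to length `nT`
  set c : Fin nT → M := fun i => if h : (i : ℕ) < m then x ⟨i, h⟩ else x ⟨0, hm0⟩ with hc
  have hcx : ∀ i : Fin m, c ⟨(i : ℕ), lt_of_lt_of_le i.isLt hmnT⟩ = x i := by
    intro i
    simp only [hc]
    rw [dif_pos (show (i : ℕ) < m from i.isLt)]
  obtain ⟨DL, hDL⟩ := CanonAux.arity_bound hLfin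
  obtain ⟨f, hfc, happrox, hcanon⟩ :=
    CanonAux.exists_limit (M := M) hLrel hLfin hlin hhom hram g c (max 2 DL)
  refine ⟨c, f, ?_, ?_⟩
  · -- canonicity of `f`
    intro n a b hst
    have hdat := CanonAux.dat_of_sameType_const c a b hst
    have himg := CanonAux.dat_image_of_canon (le_max_left 2 DL)
      (fun m' hm' => le_trans (hDL m' hm') (le_max_right 2 DL)) hcanon a b hdat
    exact CanonAux.sameType_of_dat hLrel hhom _ _ himg
  · -- the monoid equality
    have hEndN : EndSet L' M ⊆ N := subset_of_ssubset hmin.1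
    have hfN : f ∈ N := by
      apply hclosed.2.2
      intro F hF
      obtain ⟨γ, β, hγβ⟩ := happrox F hF
      refine ⟨⇑γ ∘ (g ∘ ⇑β), ?_, ?_⟩
      · exact hclosed.2.1 _ _ (hEndN (CanonAux.auto_isEndo hred γ))
          (hclosed.2.1 _ _ hgN (hEndN (CanonAux.auto_isEndo hred β)))
      · intro y hy
        exact (hγβ y hy).symm
    have hfE : f ∉ EndSet L' M := by
      intro hf
      apply hnrgx
      have hfx : ∀ i : Fin m, f (x i) = g (x i) := by
        intro i
        rw [← hcx i]
        exact hfc ⟨(i : ℕ), lt_of_lt_of_le i.isLt hmnT⟩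
      have h2 := hf m r x hrx
      rw [show (fun i => f (x i)) = (fun i => g (x i)) from funext hfx] at h2
      exact h2
    have hgen_sub : ClosedMonoidGenBy (EndSet L' M ∪ {f}) ⊆ N := by
      apply CanonAux.genBy_subset hclosed
      rintro h (hh | hh)
      · exact hEndN hh
      · rw [Set.mem_singleton_iff] at hh
        subst hh
        exact hfN
    have hgen_proper : EndSet L' M ⊂ ClosedMonoidGenBy (EndSet L' M ∪ {f}) := by
      constructor
      · exact fun h hh => CanonAux.subset_genBy _ (Or.inl hh)
      · intro hcontra
        exact hfE (hcontra (CanonAux.subset_genBy _ (Or.inr rfl)))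
    exact (hmin.2 _ (CanonAux.genBy_closed _) hgen_proper hgen_sub).symm


end PaperDef
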